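/- arXiv:2406.19527 — 3 statements merged into one kernel-verified Lean document; each statement's English description precedes it below -/
import Mathlib

section
/- Let p(x) = αx² + βx + γ be a real quadratic polynomial with max{|α|,|β|,|γ|} ≥ m > 0. Then for every ε > 0, the Lebesgue measure of {x ∈ [0,1] : |p(x)| ≤ ε} is at most 8·(ε/m)^{1/2} + 8·(ε/m). -/
open MeasureTheory

private lemma quad_triple_bound (u v w a b c ε : ℝ) (ha0 : 0 < a) (hb0 : 0 < b)
    (hc0 : 0 < c) (habc : a + b = c) (hu : |u| ≤ ε) (hv : |v| ≤ ε) (hw : |w| ≤ ε) :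
    |u * b - v * c + w * a| ≤ 2 * ε * c := by
  have h1 : |u * b - v * c + w * a| ≤ |u * b| + |v * c| + |w * a| := by
    calc |u * b - v * c + w * a| ≤ |u * b - v * c| + |w * a| := abs_add_le _ _
      _ ≤ |u * b| + |v * c| + |w * a| := by linarith [abs_sub (u * b) (v * c)]
  rw [abs_mul, abs_mul, abs_mul, abs_of_pos ha0, abs_of_pos hb0, abs_of_pos hc0] at h1
  have h2 := mul_le_mul_of_nonneg_right hu hb0.le
  have h3 := mul_le_mul_of_nonneg_right hv hc0.le
  have h4 := mul_le_mul_of_nonneg_right hw ha0.le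
  have h5 : ε * b + ε * c + ε * a = 2 * ε * c := by rw [← habc]; ring
  linarith

set_option maxHeartbeats 1000000 in
/-- Quantitative anti-concentration for quadratic polynomials on `[0,1]`:
if `max {|α|,|β|,|γ|} ≥ m > 0`, then for every `ε > 0`,
`|{x ∈ [0,1] : |αx² + βx + γ| ≤ ε}| ≤ 8√(ε/m) + 8(ε/m)`. -/
theorem quadratic_sublevel_measure (α β γ m : ℝ) (hm : 0 < m)
    (hmax : m ≤ max |α| (max |β| |γ|)) (ε : ℝ) (hε : 0 < ε) :
    volume {x ∈ Set.Icc (0 : ℝ) 1 | |α * x ^ 2 + β * x + γ| ≤ ε}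
      ≤ ENNReal.ofReal (8 * Real.sqrt (ε / m) + 8 * (ε / m)) := by
  set S := {x ∈ Set.Icc (0 : ℝ) 1 | |α * x ^ 2 + β * x + γ| ≤ ε} with hSdef
  have hSsub : S ⊆ Set.Icc (0:ℝ) 1 := fun x hx => hx.1
  have hfin : volume S ≠ ⊤ := by
    refine ne_top_of_le_ne_top ?_ (measure_mono hSsub)
    simp
  set μ := (volume S).toReal with hμdef
  have hμ0 : 0 ≤ μ := ENNReal.toReal_nonneg
  have hvol : volume S = ENNReal.ofReal μ := (ENNReal.ofReal_toReal hfin).symm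
  have htpos : 0 < ε / m := div_pos hε hm
  have hsq0 : 0 ≤ Real.sqrt (ε / m) := Real.sqrt_nonneg _
  rcases eq_or_lt_of_le hμ0 with hμz | hμpos
  · rw [hvol, ← hμz]
    simp
  -- S is closed
  have hScl : IsClosed S := by
    have : S = Set.Icc (0:ℝ) 1 ∩ {x : ℝ | |α * x ^ 2 + β * x + γ| ≤ ε} := by
      ext x; simp [hSdef, Set.mem_setOf_eq, and_comm]
    rw [this]
    exact isClosed_Icc.inter (isClosed_le (by fun_prop) continuous_const)
  have hSne : S.Nonempty := by
    apply nonempty_of_measure_ne_zero (μ := volume)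
    rw [hvol]
    simp only [ne_eq, ENNReal.ofReal_eq_zero, not_le]
    exact hμpos
  have hBdd : BddBelow S := BddBelow.mono hSsub bddBelow_Icc
  have hBdda : BddAbove S := BddAbove.mono hSsub bddAbove_Icc
  set x1 := sInf S with hx1def
  set x3 := sSup S with hx3def
  have hx1S : x1 ∈ S := IsClosed.csInf_mem hScl hSne hBdd
  have hx3S : x3 ∈ S := IsClosed.csSup_mem hScl hSne hBdda
  have hsub13 : S ⊆ Set.Icc x1 x3 := fun x hx => ⟨csInf_le hBdd hx, le_csSup hBdda hx⟩
  have hc : μ ≤ x3 - x1 := by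
    have h1 : volume S ≤ volume (Set.Icc x1 x3) := measure_mono hsub13
    rw [hvol, Real.volume_Icc] at h1
    have h13 : x1 ≤ x3 := (hsub13 hx1S).2
    have := (ENNReal.ofReal_le_ofReal_iff (by linarith)).mp h1
    linarith
  -- find a middle point
  have hmid : ∃ x2 ∈ S, x1 + 3*μ/8 ≤ x2 ∧ x2 ≤ x3 - 3*μ/8 := by
    by_contra hcon
    push_neg at hcon
    have hcover : S ⊆ Set.Ico x1 (x1 + 3*μ/8) ∪ Set.Ioc (x3 - 3*μ/8) x3 := by
      intro x hx
      rcases hsub13 hx with ⟨h1, h3⟩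
      rcases le_or_gt (x1 + 3*μ/8) x with h | h
      · exact Or.inr ⟨hcon x hx h, h3⟩
      · exact Or.inl ⟨h1, h⟩
    have h1 : volume S ≤ volume (Set.Ico x1 (x1 + 3*μ/8)) + volume (Set.Ioc (x3 - 3*μ/8) x3) :=
      le_trans (measure_mono hcover) (measure_union_le _ _)
    rw [hvol, Real.volume_Ico, Real.volume_Ioc] at h1
    have e1 : x1 + 3*μ/8 - x1 = 3*μ/8 := by ring
    have e2 : x3 - (x3 - 3*μ/8) = 3*μ/8 := by ring
    rw [e1, e2, ← ENNReal.ofReal_add (by linarith) (by linarith)] at h1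
    have := (ENNReal.ofReal_le_ofReal_iff (by linarith)).mp h1
    linarith
  obtain ⟨x2, hx2S, hg1, hg2⟩ := hmid
  -- gaps
  set a := x2 - x1 with hadef
  set b := x3 - x2 with hbdef
  have ha : 3*μ/8 ≤ a := by simp only [hadef]; linarith
  have hb : 3*μ/8 ≤ b := by simp only [hbdef]; linarith
  have hapos : 0 < a := by linarith
  have hbpos : 0 < b := by linarith
  have hcpos : 0 < x3 - x1 := by linarith
  have habc : a + b = x3 - x1 := by simp only [hadef, hbdef]; ring
  -- points are in [0,1]
  obtain ⟨hx10, hx11⟩ : 0 ≤ x1 ∧ x1 ≤ 1 := ⟨hx1S.1.1, hx1S.1.2⟩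
  obtain ⟨hx20, hx21⟩ : 0 ≤ x2 ∧ x2 ≤ 1 := ⟨hx2S.1.1, hx2S.1.2⟩
  obtain ⟨hx30, hx31⟩ : 0 ≤ x3 ∧ x3 ≤ 1 := ⟨hx3S.1.1, hx3S.1.2⟩
  -- values
  set y1 := α * x1 ^ 2 + β * x1 + γ with hy1def
  set y2 := α * x2 ^ 2 + β * x2 + γ with hy2def
  set y3 := α * x3 ^ 2 + β * x3 + γ with hy3def
  have hy1 : |y1| ≤ ε := hx1S.2
  have hy2 : |y2| ≤ ε := hx2S.2
  have hy3 : |y3| ≤ ε := hx3S.2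
  have hεabc : 0 < a * b * (x3 - x1) := by positivity
  clear_value y1 y2 y3 a b x1 x3 μ
  -- bound for α
  have hαb : |α| * (a * b) ≤ 2 * ε := by
    have Iα : α * (a * b * (x3 - x1)) = y1 * b - y2 * (x3 - x1) + y3 * a := by
      simp only [hadef, hbdef, hy1def, hy2def, hy3def]; ring
    have h1 : |α * (a * b * (x3 - x1))| ≤ 2 * ε * (x3 - x1) := by
      rw [Iα]; exact quad_triple_bound _ _ _ _ _ _ _ hapos hbpos hcpos habc hy1 hy2 hy3
    rw [abs_mul, abs_of_pos hεabc] at h1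
    refine le_of_mul_le_mul_right ?_ hcpos
    calc |α| * (a * b) * (x3 - x1) = |α| * (a * b * (x3 - x1)) := by ring
      _ ≤ 2 * ε * (x3 - x1) := h1
  -- bound for β
  have hβb : |β| * (a * b) ≤ 4 * ε := by
    have Iβ : β * (a * b * (x3 - x1)) =
        (-(y1 * (x2 + x3))) * b - (-(y2 * (x1 + x3))) * (x3 - x1) + (-(y3 * (x1 + x2))) * a := by
      simp only [hadef, hbdef, hy1def, hy2def, hy3def]; ring
    have hu : |(-(y1 * (x2 + x3)))| ≤ 2 * ε := by
      rw [abs_neg, abs_mul]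
      calc |y1| * |x2 + x3| ≤ ε * 2 := by
            apply mul_le_mul hy1 (by rw [abs_of_nonneg (by linarith)]; linarith)
              (abs_nonneg _) (le_of_lt hε)
        _ = 2 * ε := by ring
    have hv : |(-(y2 * (x1 + x3)))| ≤ 2 * ε := by
      rw [abs_neg, abs_mul]
      calc |y2| * |x1 + x3| ≤ ε * 2 := by
            apply mul_le_mul hy2 (by rw [abs_of_nonneg (by linarith)]; linarith)
              (abs_nonneg _) (le_of_lt hε)
        _ = 2 * ε := by ring
    have hw : |(-(y3 * (x1 + x2)))| ≤ 2 * ε := by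
      rw [abs_neg, abs_mul]
      calc |y3| * |x1 + x2| ≤ ε * 2 := by
            apply mul_le_mul hy3 (by rw [abs_of_nonneg (by linarith)]; linarith)
              (abs_nonneg _) (le_of_lt hε)
        _ = 2 * ε := by ring
    have h1 : |β * (a * b * (x3 - x1))| ≤ 2 * (2 * ε) * (x3 - x1) := by
      rw [Iβ]; exact quad_triple_bound _ _ _ _ _ _ _ hapos hbpos hcpos habc hu hv hw
    rw [abs_mul, abs_of_pos hεabc] at h1
    refine le_of_mul_le_mul_right ?_ hcpos
    calc |β| * (a * b) * (x3 - x1) = |β| * (a * b * (x3 - x1)) := by ring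
      _ ≤ 2 * (2 * ε) * (x3 - x1) := h1
      _ = 4 * ε * (x3 - x1) := by ring
  -- bound for γ
  have hγb : |γ| * (a * b) ≤ 2 * ε := by
    have Iγ : γ * (a * b * (x3 - x1)) =
        (y1 * (x2 * x3)) * b - (y2 * (x1 * x3)) * (x3 - x1) + (y3 * (x1 * x2)) * a := by
      simp only [hadef, hbdef, hy1def, hy2def, hy3def]; ring
    have hu : |y1 * (x2 * x3)| ≤ ε := by
      rw [abs_mul, abs_of_nonneg (mul_nonneg hx20 hx30)]
      calc |y1| * (x2 * x3) ≤ ε * 1 :=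
            mul_le_mul hy1 (mul_le_one₀ hx21 hx30 hx31) (mul_nonneg hx20 hx30) hε.le
        _ = ε := mul_one ε
    have hv : |y2 * (x1 * x3)| ≤ ε := by
      rw [abs_mul, abs_of_nonneg (mul_nonneg hx10 hx30)]
      calc |y2| * (x1 * x3) ≤ ε * 1 :=
            mul_le_mul hy2 (mul_le_one₀ hx11 hx30 hx31) (mul_nonneg hx10 hx30) hε.le
        _ = ε := mul_one ε
    have hw : |y3 * (x1 * x2)| ≤ ε := by
      rw [abs_mul, abs_of_nonneg (mul_nonneg hx10 hx20)]
      calc |y3| * (x1 * x2) ≤ ε * 1 :=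
            mul_le_mul hy3 (mul_le_one₀ hx11 hx20 hx21) (mul_nonneg hx10 hx20) hε.le
        _ = ε := mul_one ε
    have h1 : |γ * (a * b * (x3 - x1))| ≤ 2 * ε * (x3 - x1) := by
      rw [Iγ]; exact quad_triple_bound _ _ _ _ _ _ _ hapos hbpos hcpos habc hu hv hw
    rw [abs_mul, abs_of_pos hεabc] at h1
    refine le_of_mul_le_mul_right ?_ hcpos
    calc |γ| * (a * b) * (x3 - x1) = |γ| * (a * b * (x3 - x1)) := by ring
      _ ≤ 2 * ε * (x3 - x1) := h1
  -- combine: m * (a*b) ≤ 4 ε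
  have hmab : m * (a * b) ≤ 4 * ε := by
    have hab0 : 0 ≤ a * b := by positivity
    rcases le_total |α| (max |β| |γ|) with h | h
    · rcases le_total |β| |γ| with h2 | h2
      · have : m ≤ |γ| := by
          calc m ≤ max |α| (max |β| |γ|) := hmax
            _ = |γ| := by rw [max_eq_right h, max_eq_right h2]
        calc m * (a * b) ≤ |γ| * (a * b) := mul_le_mul_of_nonneg_right this hab0
          _ ≤ 2 * ε := hγb
          _ ≤ 4 * ε := by linarith
      · have : m ≤ |β| := by
          calc m ≤ max |α| (max |β| |γ|) := hmax
            _ = |β| := by rw [max_eq_right h, max_eq_left h2]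
        calc m * (a * b) ≤ |β| * (a * b) := mul_le_mul_of_nonneg_right this hab0
          _ ≤ 4 * ε := hβb
    · have : m ≤ |α| := by
        calc m ≤ max |α| (max |β| |γ|) := hmax
          _ = |α| := max_eq_left h
      calc m * (a * b) ≤ |α| * (a * b) := mul_le_mul_of_nonneg_right this hab0
        _ ≤ 2 * ε := hαb
        _ ≤ 4 * ε := by linarith
  -- hence m μ² ≤ 256/9 ε ≤ 36 ε, μ ≤ 6 √(ε/m)
  have hμsq : μ ^ 2 ≤ 36 * (ε / m) := by
    have hab : 9/64 * μ^2 ≤ a * b := by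
      nlinarith [mul_le_mul ha hb (by linarith : (0:ℝ) ≤ 3*μ/8) (by linarith : (0:ℝ) ≤ a)]
    have h1 : m * (9/64 * μ^2) ≤ 4 * ε :=
      le_trans (mul_le_mul_of_nonneg_left hab hm.le) hmab
    have h2 : μ ^ 2 ≤ 36 * ε / m := by
      rw [le_div_iff₀ hm]; linarith [h1]
    calc μ ^ 2 ≤ 36 * ε / m := h2
      _ = 36 * (ε / m) := mul_div_assoc 36 ε m
  have hsqrt36 : Real.sqrt (36 * (ε / m)) = 6 * Real.sqrt (ε / m) := by
    rw [show (36 : ℝ) * (ε/m) = (6 * Real.sqrt (ε/m))^2 by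
      rw [mul_pow, Real.sq_sqrt htpos.le]; norm_num]
    exact Real.sqrt_sq (by positivity)
  have hμle : μ ≤ 8 * Real.sqrt (ε / m) + 8 * (ε / m) := by
    have h6 : μ ≤ Real.sqrt (36 * (ε / m)) := Real.le_sqrt_of_sq_le hμsq
    rw [hsqrt36] at h6
    linarith
  rw [hvol]
  exact ENNReal.ofReal_le_ofReal hμle
end

section
/- Let F be a (κ,α,ρ)-good family of continuous functions on ℝ and let I ⊂ ℝ be an interval such that (i) every f ∈ F satisfies sup_{s∈I} f(s) ≥ ρ, and (ii) for every s ∈ I, the number of f ∈ F with f(s) < ρ is at most M. Then for every 0 < ε < ρ, the measure of I_{F,ε} = {s ∈ I : ∃ f ∈ F with f(s) < ε} is at most κ·M·(ε/ρ)^α·|I|. -/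
open MeasureTheory Set
open scoped ENNReal

/-- A family `F` of continuous nonnegative functions on `ℝ` is `(κ,α,ρ)`-good
if on every interval `[a,b]`, the sublevel set `{f < ε}` of every `f ∈ F` has
measure at most `κ (ε / sup_I f)^α (b-a)`, for all `0 < ε < ρ`. -/
def IsGoodFamily (κ α ρ : ℝ) (F : Set (ℝ → ℝ)) : Prop :=
  (∀ f ∈ F, Continuous f ∧ ∀ s, 0 ≤ f s) ∧
  ∀ a b : ℝ, a ≤ b → ∀ f ∈ F, ∀ ε : ℝ, 0 < ε → ε < ρ →
    volume {s ∈ Icc a b | f s < ε}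
      ≤ ENNReal.ofReal (κ * (ε / sSup (f '' Icc a b)) ^ α * (b - a))


lemma component_structure {a b : ℝ} {U : Set ℝ} (hUo : IsOpen U) (hUsub : U ⊆ Ioo a b)
    {s : ℝ} (hs : s ∈ U) :
    ∃ c d : ℝ, a ≤ c ∧ c < d ∧ d ≤ b ∧ connectedComponentIn U s = Ioo c d ∧
      c ∉ U ∧ d ∉ U := by
  set C := connectedComponentIn U s with hC
  have hCU : C ⊆ U := connectedComponentIn_subset U s
  have hCab : C ⊆ Ioo a b := hCU.trans hUsub
  have hsC : s ∈ C := mem_connectedComponentIn hs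
  have hne : C.Nonempty := ⟨s, hsC⟩
  have hbdd_below : BddBelow C := ⟨a, fun x hx => (hCab hx).1.le⟩
  have hbdd_above : BddAbove C := ⟨b, fun x hx => (hCab hx).2.le⟩
  have hCo : IsOpen C := hUo.connectedComponentIn
  have hord : C.OrdConnected := isPreconnected_connectedComponentIn.ordConnected
  set c := sInf C
  set d := sSup C
  have hcnotin : c ∉ C := fun h => by
    rcases (Metric.isOpen_iff.1 hCo c h) with ⟨δ, hδ, hball⟩
    have : c - δ/2 ∈ C := hball (by
      simp only [Metric.mem_ball, Real.dist_eq]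
      rw [abs_of_nonpos (by linarith)]; linarith)
    have := csInf_le hbdd_below this
    linarith
  have hdnotin : d ∉ C := fun h => by
    rcases (Metric.isOpen_iff.1 hCo d h) with ⟨δ, hδ, hball⟩
    have : d + δ/2 ∈ C := hball (by
      simp only [Metric.mem_ball, Real.dist_eq]
      rw [abs_of_nonneg (by linarith)]; linarith)
    have := le_csSup hbdd_above this
    linarith
  have hCeq : C = Ioo c d := by
    apply Subset.antisymm
    · intro x hx
      have h1 : c ≤ x := csInf_le hbdd_below hx
      have h2 : x ≤ d := le_csSup hbdd_above hx
      exact ⟨h1.lt_of_ne (fun h => hcnotin (h ▸ hx)), h2.lt_of_ne (fun h => hdnotin (h.symm ▸ hx))⟩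
    · intro x hx
      obtain ⟨u, hu, hux⟩ := (csInf_lt_iff hbdd_below hne).1 hx.1
      obtain ⟨v, hv, hxv⟩ := (lt_csSup_iff hbdd_above hne).1 hx.2
      exact hord.out hu hv ⟨hux.le, hxv.le⟩
  have hcd : c < d := by have := hCeq ▸ hsC; exact lt_trans this.1 this.2
  have hac : a ≤ c := le_csInf hne (fun x hx => (hCab hx).1.le)
  have hdb : d ≤ b := csSup_le hne (fun x hx => (hCab hx).2.le)
  refine ⟨c, d, hac, hcd, hdb, hCeq, ?_, ?_⟩
  · intro hcU
    have hsIco : s ∈ Ico c d := ⟨(hCeq ▸ hsC).1.le, (hCeq ▸ hsC).2⟩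
    have hsubU : Ico c d ⊆ U := by
      intro x hx
      rcases eq_or_lt_of_le hx.1 with h | h
      · exact h ▸ hcU
      · exact hCU (hCeq ▸ (⟨h, hx.2⟩ : x ∈ Ioo c d))
    have hsub : Ico c d ⊆ C :=
      IsPreconnected.subset_connectedComponentIn isPreconnected_Ico hsIco hsubU
    exact hcnotin (hsub ⟨le_refl c, hcd⟩)
  · intro hdU
    have hsIoc : s ∈ Ioc c d := ⟨(hCeq ▸ hsC).1, (hCeq ▸ hsC).2.le⟩
    have hsubU : Ioc c d ⊆ U := by
      intro x hx
      rcases eq_or_lt_of_le hx.2 with h | h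
      · exact h ▸ hdU
      · exact hCU (hCeq ▸ (⟨hx.1, h⟩ : x ∈ Ioo c d))
    have hsub : Ioc c d ⊆ C :=
      IsPreconnected.subset_connectedComponentIn isPreconnected_Ioc hsIoc hsubU
    exact hdnotin (hsub ⟨hcd, le_refl d⟩)

lemma per_function (κ α ρ ε a b : ℝ) (hκ : 0 < κ) (hα : 0 < α) (hρ : 0 < ρ)
    (hε : 0 < ε) (hερ : ε < ρ) (hab : a ≤ b)
    (f : ℝ → ℝ) (hfc : Continuous f)
    (hgood : ∀ c d : ℝ, c ≤ d → Icc c d ⊆ Icc a b →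
      volume {s ∈ Icc c d | f s < ε} ≤ ENNReal.ofReal (κ * (ε / sSup (f '' Icc c d)) ^ α * (d - c)))
    (hsupf : ρ ≤ sSup (f '' Icc a b)) :
    volume {s ∈ Icc a b | f s < ε}
      ≤ ENNReal.ofReal (κ * (ε / ρ) ^ α) * volume {s ∈ Icc a b | f s < ρ} := by
  classical
  set k : ℝ≥0∞ := ENNReal.ofReal (κ * (ε / ρ) ^ α) with hk
  set U : Set ℝ := Ioo a b ∩ f ⁻¹' (Iio ρ) with hU
  have hUo : IsOpen U := isOpen_Ioo.inter (isOpen_Iio.preimage hfc)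
  have hUsub : U ⊆ Ioo a b := inter_subset_left
  -- countable family of components covering U
  obtain ⟨T, hTc, hTU⟩ := TopologicalSpace.isOpen_iUnion_countable
    (fun s : U => connectedComponentIn U (s : ℝ)) (fun s => hUo.connectedComponentIn)
  have hUnion : ⋃ s ∈ T, connectedComponentIn U (s : ℝ) = U := by
    rw [hTU]
    apply Subset.antisymm
    · exact iUnion_subset fun s => connectedComponentIn_subset U _
    · intro x hx; exact mem_iUnion.2 ⟨⟨x, hx⟩, mem_connectedComponentIn hx⟩
  set 𝒮 : Set (Set ℝ) := (fun s : U => connectedComponentIn U (s : ℝ)) '' T with h𝒮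
  have h𝒮c : 𝒮.Countable := hTc.image _
  have h𝒮U : ⋃₀ 𝒮 = U := by
    rw [h𝒮, sUnion_image]; exact hUnion
  have h𝒮disj : 𝒮.Pairwise Disjoint := by
    rintro J₁ ⟨s₁, _, rfl⟩ J₂ ⟨s₂, _, rfl⟩ hne
    rw [Set.disjoint_left]
    intro x hx1 hx2
    exact hne ((connectedComponentIn_eq hx1).trans (connectedComponentIn_eq hx2).symm)
  have h𝒮meas : ∀ J ∈ 𝒮, MeasurableSet J := by
    rintro J ⟨s, _, rfl⟩; exact hUo.connectedComponentIn.measurableSet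
  -- key estimate per component
  have hkey : ∀ J ∈ 𝒮, volume ({s ∈ Icc a b | f s < ε} ∩ J) ≤ k * volume J := by
    rintro J ⟨s, _, rfl⟩
    obtain ⟨c, d, hac, hcd, hdb, hJ, hcU, hdU⟩ := component_structure hUo hUsub s.2
    dsimp only
    rw [hJ]
    have hIccsub : Icc c d ⊆ Icc a b := Icc_subset_Icc hac hdb
    have hsub : {s ∈ Icc a b | f s < ε} ∩ Ioo c d ⊆ {s ∈ Icc c d | f s < ε} := by
      rintro x ⟨⟨_, hxε⟩, hxJ⟩
      exact ⟨⟨hxJ.1.le, hxJ.2.le⟩, hxε⟩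
    have hSne : (f '' Icc c d).Nonempty := ⟨f c, mem_image_of_mem f ⟨le_refl c, hcd.le⟩⟩
    have hSbdd : BddAbove (f '' Icc c d) := (isCompact_Icc.image hfc).bddAbove
    have hS : ρ ≤ sSup (f '' Icc c d) := by
      by_cases hca : a < c
      · have hcρ : ρ ≤ f c := by
          by_contra h
          exact hcU ⟨⟨hca, lt_of_lt_of_le hcd hdb⟩, not_le.1 h⟩
        exact hcρ.trans (le_csSup hSbdd (mem_image_of_mem f ⟨le_refl c, hcd.le⟩))
      · have hca : c = a := le_antisymm (not_lt.1 hca) hac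
        by_cases hdb' : d < b
        · have hdρ : ρ ≤ f d := by
            by_contra h
            exact hdU ⟨⟨hca ▸ hcd, hdb'⟩, not_le.1 h⟩
          exact hdρ.trans (le_csSup hSbdd (mem_image_of_mem f ⟨hcd.le, le_refl d⟩))
        · have hdb'' : d = b := le_antisymm hdb (not_lt.1 hdb')
          rw [hca, hdb'']; exact hsupf
    calc volume ({s ∈ Icc a b | f s < ε} ∩ Ioo c d)
        ≤ volume {s ∈ Icc c d | f s < ε} := measure_mono hsub
      _ ≤ ENNReal.ofReal (κ * (ε / sSup (f '' Icc c d)) ^ α * (d - c)) :=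
          hgood c d hcd.le hIccsub
      _ ≤ ENNReal.ofReal (κ * (ε / ρ) ^ α * (d - c)) := by
          apply ENNReal.ofReal_le_ofReal
          have h1 : ε / sSup (f '' Icc c d) ≤ ε / ρ :=
            div_le_div_of_nonneg_left hε.le hρ hS
          have h2 : (ε / sSup (f '' Icc c d)) ^ α ≤ (ε / ρ) ^ α :=
            Real.rpow_le_rpow (div_nonneg hε.le (hρ.trans_le hS).le) h1 hα.le
          have h3 : (0:ℝ) ≤ d - c := by linarith
          exact mul_le_mul_of_nonneg_right (mul_le_mul_of_nonneg_left h2 hκ.le) h3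
      _ = k * volume (Ioo c d) := by
          rw [Real.volume_Ioo, hk, ← ENNReal.ofReal_mul
            (mul_nonneg hκ.le (Real.rpow_nonneg (div_nonneg hε.le hρ.le) α))]
  -- assemble
  have hAsub : {s ∈ Icc a b | f s < ε} ⊆ ({s ∈ Icc a b | f s < ε} ∩ U) ∪ {a, b} := by
    rintro x ⟨hx, hxε⟩
    rcases eq_or_lt_of_le hx.1 with h | h
    · exact Or.inr (Or.inl h.symm)
    rcases eq_or_lt_of_le hx.2 with h' | h'
    · exact Or.inr (Or.inr h')
    exact Or.inl ⟨⟨hx, hxε⟩, ⟨h, h'⟩, hxε.trans hερ⟩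
  calc volume {s ∈ Icc a b | f s < ε}
      ≤ volume (({s ∈ Icc a b | f s < ε} ∩ U) ∪ ({a, b} : Set ℝ)) := measure_mono hAsub
    _ ≤ volume ({s ∈ Icc a b | f s < ε} ∩ U) + volume ({a, b} : Set ℝ) := measure_union_le _ _
    _ = volume ({s ∈ Icc a b | f s < ε} ∩ U) := by
        have h0 : volume ({a, b} : Set ℝ) = 0 :=
          ((finite_singleton b).insert a).measure_zero volume
        rw [h0, add_zero]
    _ = volume (⋃ J ∈ 𝒮, ({s ∈ Icc a b | f s < ε} ∩ J)) := by
        rw [← inter_iUnion₂, ← sUnion_eq_biUnion, h𝒮U]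
    _ ≤ ∑' J : 𝒮, volume ({s ∈ Icc a b | f s < ε} ∩ (J : Set ℝ)) :=
        measure_biUnion_le volume h𝒮c _
    _ ≤ ∑' J : 𝒮, k * volume (J : Set ℝ) := ENNReal.tsum_le_tsum (fun J => hkey J J.2)
    _ = k * ∑' J : 𝒮, volume (J : Set ℝ) := ENNReal.tsum_mul_left
    _ = k * volume (⋃₀ 𝒮) := by rw [measure_sUnion h𝒮c h𝒮disj h𝒮meas]
    _ ≤ k * volume {s ∈ Icc a b | f s < ρ} := by
        apply mul_le_mul_right (measure_mono _)
        rw [h𝒮U]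
        rintro x ⟨hx, hxρ⟩
        exact ⟨⟨hx.1.le, hx.2.le⟩, hxρ⟩

lemma counting (ρ a b : ℝ) (F : Set (ℝ → ℝ)) (M : ℕ) (hab : a ≤ b)
    (hFc : ∀ f ∈ F, Continuous f)
    (hM : ∀ s ∈ Icc a b, ({f ∈ F | f s < ρ}).Finite ∧ Nat.card {f ∈ F | f s < ρ} ≤ M)
    (T : Set ↥F) (hTc : T.Countable) :
    ∑' f : T, volume {s ∈ Icc a b | (f : ℝ → ℝ) s < ρ}
      ≤ ENNReal.ofReal (M * (b - a)) := by
  classical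
  have : Countable T := hTc.to_subtype
  set B : T → Set ℝ := fun f => {s ∈ Icc a b | (f : ℝ → ℝ) s < ρ} with hB
  have hBmeas : ∀ f : T, MeasurableSet (B f) := by
    intro f
    exact measurableSet_Icc.inter ((isOpen_Iio.preimage (hFc _ f.1.2)).measurableSet)
  have h1 : ∀ f : T, volume (B f) = ∫⁻ s, (B f).indicator 1 s :=
    fun f => (lintegral_indicator_one (hBmeas f)).symm
  calc ∑' f : T, volume (B f)
      = ∑' f : T, ∫⁻ s, (B f).indicator 1 s := by simp_rw [h1]
    _ = ∫⁻ s, ∑' f : T, (B f).indicator 1 s :=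
        (lintegral_tsum (fun f => ((measurable_one.indicator (hBmeas f)).aemeasurable))).symm
    _ ≤ ∫⁻ s, (Icc a b).indicator (fun _ => (M : ℝ≥0∞)) s := by
        apply lintegral_mono
        intro s
        by_cases hs : s ∈ Icc a b
        · rw [indicator_of_mem hs]
          obtain ⟨hfin, hcard⟩ := hM s hs
          apply Summable.tsum_le_of_sum_le ENNReal.summable
          intro S
          have hsum : ∑ f ∈ S, (B f).indicator (1 : ℝ → ℝ≥0∞) s
              = ((S.filter (fun f : T => (f : ℝ → ℝ) s < ρ)).card : ℝ≥0∞) := by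
            rw [Finset.card_filter]
            push_cast
            apply Finset.sum_congr rfl
            intro f _
            by_cases hf : (f : ℝ → ℝ) s < ρ
            · rw [if_pos hf, indicator_of_mem (show s ∈ B f from ⟨hs, hf⟩)]; rfl
            · rw [if_neg hf, indicator_of_notMem (fun h => hf h.2)]
          refine le_trans (le_of_eq hsum) ?_
          have hcard2 : (S.filter (fun f : T => (f : ℝ → ℝ) s < ρ)).card
              ≤ Nat.card {f ∈ F | f s < ρ} := by
            rw [Nat.card_coe_set_eq, Set.ncard_eq_toFinset_card _ hfin]
            apply Finset.card_le_card_of_injOn (fun f : T => ((f : ℝ → ℝ)))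
            · intro f hf
              rw [Finset.mem_coe, Set.Finite.mem_toFinset]
              exact ⟨f.1.2, (Finset.mem_filter.1 hf).2⟩
            · intro f _ g _ hfg
              exact Subtype.ext (Subtype.ext hfg)
          exact_mod_cast hcard2.trans hcard
        · rw [indicator_of_notMem hs]
          have : ∀ f : T, (B f).indicator (1 : ℝ → ℝ≥0∞) s = 0 :=
            fun f => indicator_of_notMem (fun h => hs h.1) _
          simp [this]
    _ = M * volume (Icc a b) := by
        rw [lintegral_indicator_const measurableSet_Icc]
    _ = ENNReal.ofReal (M * (b - a)) := by
        rw [Real.volume_Icc, ← ENNReal.ofReal_natCast M,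
          ← ENNReal.ofReal_mul (Nat.cast_nonneg M)]

/-- Sparse-covering estimate: if `F` is `(κ,α,ρ)`-good, every `f ∈ F` has sup
at least `ρ` on `I = [a,b]`, and at most `M` members of `F` drop below `ρ` at
any point of `I`, then `|{s ∈ I : ∃ f ∈ F, f s < ε}| ≤ κ M (ε/ρ)^α |I|` for
all `0 < ε < ρ`. -/
theorem good_family_sparse_covering (κ α ρ : ℝ) (F : Set (ℝ → ℝ)) (M : ℕ)
    (hκ : 0 < κ) (hα : 0 < α) (hρ : 0 < ρ)
    (hgood : IsGoodFamily κ α ρ F)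
    (a b : ℝ) (hab : a ≤ b)
    (hsup : ∀ f ∈ F, ρ ≤ sSup (f '' Icc a b))
    (hM : ∀ s ∈ Icc a b, ({f ∈ F | f s < ρ}).Finite ∧ Nat.card {f ∈ F | f s < ρ} ≤ M)
    (ε : ℝ) (hε : 0 < ε) (hερ : ε < ρ) :
    volume {s ∈ Icc a b | ∃ f ∈ F, f s < ε}
      ≤ ENNReal.ofReal (κ * M * (ε / ρ) ^ α * (b - a)) := by

  classical
  obtain ⟨hF1, hF2⟩ := hgood
  set k : ℝ≥0∞ := ENNReal.ofReal (κ * (ε / ρ) ^ α) with hk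
  -- Lindelöf: countable subfamily covering the open part of the bad set
  set V : ↥F → Set ℝ := fun f => Ioo a b ∩ (f : ℝ → ℝ) ⁻¹' (Iio ε) with hV
  have hVo : ∀ f : ↥F, IsOpen (V f) :=
    fun f => isOpen_Ioo.inter (isOpen_Iio.preimage (hF1 f f.2).1)
  obtain ⟨T, hTc, hTU⟩ := TopologicalSpace.isOpen_iUnion_countable V hVo
  have : Countable T := hTc.to_subtype
  -- inclusion
  have hEsub : {s ∈ Icc a b | ∃ f ∈ F, f s < ε}
      ⊆ (⋃ f ∈ T, V f) ∪ ({a, b} : Set ℝ) := by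
    rintro x ⟨hx, f, hfF, hfx⟩
    rcases eq_or_lt_of_le hx.1 with h | h
    · exact Or.inr (Or.inl h.symm)
    rcases eq_or_lt_of_le hx.2 with h' | h'
    · exact Or.inr (Or.inr h')
    refine Or.inl ?_
    rw [hTU]
    exact mem_iUnion.2 ⟨⟨f, hfF⟩, ⟨h, h'⟩, hfx⟩
  -- per-function bound
  have hperf : ∀ f : T, volume (V f)
      ≤ k * volume {s ∈ Icc a b | ((f : ℝ → ℝ)) s < ρ} := by
    intro f
    have hsub : V f ⊆ {s ∈ Icc a b | ((f : ℝ → ℝ)) s < ε} := by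
      rintro x ⟨hx, hxε⟩
      exact ⟨⟨hx.1.le, hx.2.le⟩, hxε⟩
    refine (measure_mono hsub).trans ?_
    apply per_function κ α ρ ε a b hκ hα hρ hε hερ hab _ (hF1 _ f.1.2).1 _ (hsup _ f.1.2)
    intro c d hcd hsub'
    exact hF2 c d hcd _ f.1.2 ε hε hερ
  calc volume {s ∈ Icc a b | ∃ f ∈ F, f s < ε}
      ≤ volume ((⋃ f ∈ T, V f) ∪ ({a, b} : Set ℝ)) := measure_mono hEsub
    _ ≤ volume (⋃ f ∈ T, V f) + volume ({a, b} : Set ℝ) := measure_union_le _ _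
    _ = volume (⋃ f ∈ T, V f) := by
        have h0 : volume ({a, b} : Set ℝ) = 0 :=
          ((finite_singleton b).insert a).measure_zero volume
        rw [h0, add_zero]
    _ ≤ ∑' f : T, volume (V f) := measure_biUnion_le volume hTc _
    _ ≤ ∑' f : T, k * volume {s ∈ Icc a b | ((f : ℝ → ℝ)) s < ρ} :=
        ENNReal.tsum_le_tsum hperf
    _ = k * ∑' f : T, volume {s ∈ Icc a b | ((f : ℝ → ℝ)) s < ρ} := ENNReal.tsum_mul_left
    _ ≤ k * ENNReal.ofReal (M * (b - a)) := by
        exact mul_le_mul_right (counting ρ a b F M hab (fun f hf => (hF1 f hf).1) hM T hTc) _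
    _ = ENNReal.ofReal (κ * M * (ε / ρ) ^ α * (b - a)) := by
        rw [hk, ← ENNReal.ofReal_mul
          (mul_nonneg hκ.le (Real.rpow_nonneg (div_nonneg hε.le hρ.le) α))]
        ring_nf
end

section
/- Let L : [0,1] → ℝ be differentiable with L(0) = 0 and suppose L'(t) ≤ v·e^{L(t)} for all t ∈ [0,1], where 0 < v < 1. Then L'(t) ≤ v/(1 - t·v) for all t ∈ [0,1], and in particular L(1) ≤ -log(1 - v) ≤ v/(1-v). -/
open Set

/-- Gronwall-type comparison: if `L(0) = 0` and `L'(t) ≤ v e^{L(t)}` on `[0,1]`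
with `0 < v < 1`, then `L'(t) ≤ v/(1 - tv)` on `[0,1]`, and in particular
`L(1) ≤ -log(1-v) ≤ v/(1-v)`. -/
theorem gronwall_exp_comparison (L L' : ℝ → ℝ) (v : ℝ) (hv0 : 0 < v) (hv1 : v < 1)
    (hderiv : ∀ t ∈ Icc (0 : ℝ) 1, HasDerivAt L (L' t) t)
    (hL0 : L 0 = 0)
    (hineq : ∀ t ∈ Icc (0 : ℝ) 1, L' t ≤ v * Real.exp (L t)) :
    (∀ t ∈ Icc (0 : ℝ) 1, L' t ≤ v / (1 - t * v)) ∧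
      L 1 ≤ -Real.log (1 - v) ∧ -Real.log (1 - v) ≤ v / (1 - v) := by
  set g : ℝ → ℝ := fun t => Real.exp (-(L t)) + v * t with hg
  have hgderiv : ∀ t ∈ Icc (0 : ℝ) 1,
      HasDerivAt g (-L' t * Real.exp (-(L t)) + v) t := by
    intro t ht
    have h1 := ((hderiv t ht).neg.exp).add ((hasDerivAt_id' t).const_mul v)
    exact h1.congr_deriv (by simp only [Pi.neg_apply]; ring)
  have hgnonneg : ∀ t ∈ Icc (0 : ℝ) 1, 0 ≤ -L' t * Real.exp (-(L t)) + v := by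
    intro t ht
    have h1 : L' t * Real.exp (-(L t)) ≤ v := by
      have := mul_le_mul_of_nonneg_right (hineq t ht) (Real.exp_pos (-(L t))).le
      rwa [mul_assoc, ← Real.exp_add, add_neg_cancel, Real.exp_zero, mul_one] at this
    nlinarith
  have hmono : MonotoneOn g (Icc (0 : ℝ) 1) := by
    apply monotoneOn_of_deriv_nonneg (convex_Icc 0 1)
    · exact fun t ht => ((hgderiv t ht).continuousAt).continuousWithinAt
    · intro t ht
      rw [interior_Icc] at ht
      exact ((hgderiv t (Ioo_subset_Icc_self ht)).differentiableAt).differentiableWithinAt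
    · intro t ht
      rw [interior_Icc] at ht
      rw [(hgderiv t (Ioo_subset_Icc_self ht)).deriv]
      exact hgnonneg t (Ioo_subset_Icc_self ht)
  have key : ∀ t ∈ Icc (0 : ℝ) 1, 1 - t * v ≤ Real.exp (-(L t)) := by
    intro t ht
    have h0 : g 0 ≤ g t := hmono (by constructor <;> norm_num) ht ht.1
    simp only [hg, hL0, neg_zero, Real.exp_zero, mul_zero, add_zero] at h0
    linarith [h0, mul_comm t v]
  have hpos : ∀ t ∈ Icc (0 : ℝ) 1, 0 < 1 - t * v := by
    intro t ht
    nlinarith [ht.1, ht.2]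
  have hexp : ∀ t ∈ Icc (0 : ℝ) 1, Real.exp (L t) ≤ (1 - t * v)⁻¹ := by
    intro t ht
    have h2 := inv_anti₀ (hpos t ht) (key t ht)
    rw [← Real.exp_neg, neg_neg] at h2
    exact h2
  refine ⟨fun t ht => ?_, ?_, ?_⟩
  · have := mul_le_mul_of_nonneg_left (hexp t ht) hv0.le
    calc L' t ≤ v * Real.exp (L t) := hineq t ht
      _ ≤ v * (1 - t * v)⁻¹ := this
      _ = v / (1 - t * v) := by rw [div_eq_mul_inv]
  · have h1 : Real.exp (L 1) ≤ (1 - v)⁻¹ := by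
      have := hexp 1 (by constructor <;> norm_num)
      simpa using this
    have := Real.log_le_log (Real.exp_pos _) h1
    rwa [Real.log_exp, Real.log_inv] at this
  · rw [← Real.log_inv]
    have h1v : 0 < 1 - v := by linarith
    have := Real.log_le_sub_one_of_pos (inv_pos.mpr h1v)
    calc Real.log (1 - v)⁻¹ ≤ (1 - v)⁻¹ - 1 := this
      _ = v / (1 - v) := by field_simp; ring
end
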